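/- Let D ∈ ℝ^{n×n} be symmetric positive semidefinite, E ∈ ℝ^{n×n}, c₀ > 0, w* ∈ ℝⁿ, and let (wᵏ)_{k≥0}, (w̃ᵏ)_{k≥0} be sequences in ℝⁿ such that for all k ≥ 0: (i) (w^{k+1} − w*)ᵀD(w^{k+1} − w*) ≤ (wᵏ − w*)ᵀD(wᵏ − w*) − c₀·(E(wᵏ − w̃ᵏ))ᵀD(E(wᵏ − w̃ᵏ)), and (ii) (E(w^{k+1} − w̃^{k+1}))ᵀD(E(w^{k+1} − w̃^{k+1})) ≤ (E(wᵏ − w̃ᵏ))ᵀD(E(wᵏ − w̃ᵏ)). Then for every integer t ≥ 0: (E(wᵗ − w̃ᵗ))ᵀD(E(wᵗ − w̃ᵗ)) ≤ (1/((t+1)·c₀))·(w⁰ − w*)ᵀD(w⁰ − w*). -/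

import Mathlib

open Matrix

/-- Worst-case nonergodic O(1/t) convergence rate of neADMM: under the contraction
inequality toward `w*` (with constant `c₀ > 0`) and the monotone nonincreasing property
of `‖E(wᵏ − w̃ᵏ)‖_D²`, for every `t ≥ 0` one has
`‖E(wᵗ − w̃ᵗ)‖_D² ≤ ‖w⁰ − w*‖_D²/((t+1)·c₀)`. -/
theorem neADMM_nonergodic_rate {n : ℕ}
    (D : Matrix (Fin n) (Fin n) ℝ) (hD : D.PosSemidef)
    (E : Matrix (Fin n) (Fin n) ℝ) (c₀ : ℝ) (hc₀ : 0 < c₀) (ws : Fin n → ℝ)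
    (w wt : ℕ → (Fin n → ℝ))
    (h1 : ∀ k : ℕ, (w (k + 1) - ws) ⬝ᵥ (D *ᵥ (w (k + 1) - ws)) ≤
      (w k - ws) ⬝ᵥ (D *ᵥ (w k - ws)) -
        c₀ * ((E *ᵥ (w k - wt k)) ⬝ᵥ (D *ᵥ (E *ᵥ (w k - wt k)))))
    (h2 : ∀ k : ℕ,
      (E *ᵥ (w (k + 1) - wt (k + 1))) ⬝ᵥ (D *ᵥ (E *ᵥ (w (k + 1) - wt (k + 1)))) ≤
        (E *ᵥ (w k - wt k)) ⬝ᵥ (D *ᵥ (E *ᵥ (w k - wt k)))) :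
    ∀ t : ℕ, (E *ᵥ (w t - wt t)) ⬝ᵥ (D *ᵥ (E *ᵥ (w t - wt t))) ≤
      (1 / (((t : ℝ) + 1) * c₀)) * ((w 0 - ws) ⬝ᵥ (D *ᵥ (w 0 - ws))) := by
  intro t
  set a : ℕ → ℝ := fun k => (E *ᵥ (w k - wt k)) ⬝ᵥ (D *ᵥ (E *ᵥ (w k - wt k))) with ha
  set b : ℕ → ℝ := fun k => (w k - ws) ⬝ᵥ (D *ᵥ (w k - ws)) with hb
  have hanti : ∀ i j : ℕ, i ≤ j → a j ≤ a i := by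
    intro i j hij
    induction j with
    | zero => simp_all
    | succ m ih =>
      rcases Nat.lt_or_ge i (m+1) with h | h
      · exact (h2 m).trans (ih (Nat.lt_succ_iff.mp h))
      · have : i = m + 1 := le_antisymm hij h
        simp [this]
  have hsum : ∀ s : ℕ, c₀ * (∑ k ∈ Finset.range (s+1), a k) ≤ b 0 - b (s+1) := by
    intro s
    induction s with
    | zero => simpa using (by linarith [h1 0] : c₀ * a 0 ≤ b 0 - b 1)
    | succ m ih =>
      rw [Finset.sum_range_succ, mul_add]
      have := h1 (m+1)
      have h1' : c₀ * a (m+1) ≤ b (m+1) - b (m+2) := by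
        simp only [ha, hb] at *; linarith
      linarith
  have hb0 : 0 ≤ b (t+1) := hD.dotProduct_mulVec_nonneg _
  have hsumge : ((t : ℝ) + 1) * a t ≤ ∑ k ∈ Finset.range (t+1), a k := by
    have : ∀ k ∈ Finset.range (t+1), a t ≤ a k := fun k hk =>
      hanti k t (Nat.lt_succ_iff.mp (Finset.mem_range.mp hk))
    calc ((t : ℝ) + 1) * a t = ∑ _k ∈ Finset.range (t+1), a t := by
          simp [mul_comm]
      _ ≤ ∑ k ∈ Finset.range (t+1), a k := Finset.sum_le_sum this
  have hpos : (0:ℝ) < ((t : ℝ) + 1) * c₀ := by positivity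
  rw [div_mul_eq_mul_div, one_mul, le_div_iff₀ hpos]
  have : c₀ * (((t:ℝ)+1) * a t) ≤ c₀ * ∑ k ∈ Finset.range (t+1), a k :=
    mul_le_mul_of_nonneg_left hsumge hc₀.le
  have hfin := (this.trans (hsum t)).trans (by linarith : b 0 - b (t+1) ≤ b 0)
  calc a t * (((t:ℝ)+1) * c₀) = c₀ * (((t:ℝ)+1) * a t) := by ring
    _ ≤ b 0 := hfin
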